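/- Let q be a power of 2, let α ∈ F_q have absolute trace Tr(α) = 1, and let λ₁, λ₂ ∈ F_q be nonzero with Tr(λ₁λ₂) = 0. Then no point of the conic C_{λ₁²} : X₂² + X₂X₃ + αX₃² + λ₁²X₁² = 0 is conjugate, with respect to the pseudo polarity, to any point of the conic C_{λ₂²} : X₂² + X₂X₃ + αX₃² + λ₂²X₁² = 0; that is, for all R = (r₁,r₂,r₃) on C_{λ₁²} and S = (s₁,s₂,s₃) on C_{λ₂²}, one has r₁s₁ + r₃s₂ + r₂s₃ ≠ 0. -/

import Mathlib

set_option linter.unusedSectionVars false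

section aux

variable {F : Type} [Field F] [Fintype F] [Algebra (ZMod 2) F]

lemma myCharP : CharP F 2 :=
  charP_of_injective_algebraMap (algebraMap (ZMod 2) F).injective 2

noncomputable def frobAlgEquiv : F ≃ₐ[ZMod 2] F :=
  haveI : CharP F 2 := myCharP
  haveI : ExpChar F 2 := .prime Nat.prime_two
  { frobeniusEquiv F 2 with
    commutes' := fun c => by
      show frobenius F 2 _ = _
      rw [frobenius_def, ← map_pow]
      congr 1
      revert c; decide }

lemma frobAlgEquiv_apply (x : F) : frobAlgEquiv x = x ^ 2 := rfl

lemma tr_sq (x : F) :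
    Algebra.trace (ZMod 2) F (x ^ 2) = Algebra.trace (ZMod 2) F x := by
  apply (algebraMap (ZMod 2) F).injective
  rw [trace_eq_sum_automorphisms, trace_eq_sum_automorphisms]
  have h : ∀ σ : F ≃ₐ[ZMod 2] F, σ (x ^ 2) = (σ * frobAlgEquiv : F ≃ₐ[ZMod 2] F) x :=
    fun σ => by rw [AlgEquiv.mul_apply, frobAlgEquiv_apply]
  simp_rw [h]
  exact Equiv.sum_comp (Equiv.mulRight (frobAlgEquiv (F := F))) (fun τ => τ x)

lemma quad_trace {u c : F} (h : u ^ 2 + u + c = 0) :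
    Algebra.trace (ZMod 2) F c = 0 := by
  haveI : CharP F 2 := myCharP
  have two : (2 : F) = 0 := by exact_mod_cast CharP.cast_eq_zero F 2
  have hc : c = u ^ 2 + u := by linear_combination h - (u ^ 2 + u) * two
  rw [hc, map_add, tr_sq]
  exact CharTwo.add_self_eq_zero _

lemma zmod2_helper : ∀ t : ZMod 2, 1 + t = 0 → t = 1 := by decide

/-- A point on the conic with nonzero third coordinate forces `Tr (l * (x0/x2)) = 1`,
given `Tr α = 1`. -/
lemma conic_trace {α l x0 x1 x2 : F} (hα : Algebra.trace (ZMod 2) F α = 1)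
    (hx2 : x2 ≠ 0) (hC : x1 ^ 2 + x1 * x2 + α * x2 ^ 2 + l ^ 2 * x0 ^ 2 = 0) :
    Algebra.trace (ZMod 2) F (l * (x0 / x2)) = 1 := by
  haveI : CharP F 2 := myCharP
  have h : (x1 / x2) ^ 2 + (x1 / x2) + (α + (l * (x0 / x2)) ^ 2) = 0 := by
    field_simp
    linear_combination hC
  have h0 := quad_trace h
  rw [map_add, hα, tr_sq] at h0
  exact zmod2_helper _ h0

end aux

/-- Let `q = 2ⁿ`, let `α ∈ F_q` have absolute trace `1` and let `l₁, l₂ ∈ F_q` be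
nonzero with `Tr(l₁l₂) = 0`. Then no point of the conic
`C_{l₁²} : X₂² + X₂X₃ + αX₃² + l₁²X₁² = 0` is conjugate, with respect to the pseudo
polarity, to any point of the conic `C_{l₂²} : X₂² + X₂X₃ + αX₃² + l₂²X₁² = 0`:
for any representatives `r`, `s` one has `r₁s₁ + r₃s₂ + r₂s₃ ≠ 0`. -/
theorem conics_non_conjugate
    (n : ℕ) (hn : 0 < n)
    (F : Type) [Field F] [Fintype F] [Algebra (ZMod 2) F]
    (hF : Fintype.card F = 2 ^ n)
    (α l₁ l₂ : F) (hα : Algebra.trace (ZMod 2) F α = 1)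
    (hl₁ : l₁ ≠ 0) (hl₂ : l₂ ≠ 0)
    (hl : Algebra.trace (ZMod 2) F (l₁ * l₂) = 0)
    (r s : Fin 3 → F) (hr : r ≠ 0) (hs : s ≠ 0)
    (hrC : r 1 ^ 2 + r 1 * r 2 + α * r 2 ^ 2 + l₁ ^ 2 * r 0 ^ 2 = 0)
    (hsC : s 1 ^ 2 + s 1 * s 2 + α * s 2 ^ 2 + l₂ ^ 2 * s 0 ^ 2 = 0) :
    r 0 * s 0 + r 2 * s 1 + r 1 * s 2 ≠ 0 := by
  haveI : CharP F 2 := myCharP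
  have two : (2 : F) = 0 := by exact_mod_cast CharP.cast_eq_zero F 2
  have sqrt_eq : ∀ x y : F, x ^ 2 = y ^ 2 → x = y := by
    intro x y h
    have h2 : (x + y) ^ 2 = 0 := by linear_combination h + (x * y + y ^ 2) * two
    have h3 : x + y = 0 := pow_eq_zero_iff (n := 2) (by norm_num) |>.mp h2
    linear_combination h3 - y * two
  intro E
  by_cases hr2 : r 2 = 0
  · -- case r 2 = 0
    have hr1 : r 1 = l₁ * r 0 := by
      apply sqrt_eq
      linear_combination hrC - (r 1 + α * r 2) * hr2 - (l₁ ^ 2 * r 0 ^ 2) * two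
    have hr0 : r 0 ≠ 0 := by
      intro h0
      apply hr
      funext i
      fin_cases i
      · exact h0
      · show r 1 = 0
        rw [hr1, h0, mul_zero]
      · exact hr2
    have hs0 : s 0 = l₁ * s 2 := by
      apply mul_left_cancel₀ hr0
      linear_combination E - s 1 * hr2 - s 2 * hr1 - (l₁ * r 0 * s 2) * two
    by_cases hs2 : s 2 = 0
    · apply hs
      have hs0' : s 0 = 0 := by rw [hs0, hs2, mul_zero]
      have hs1 : s 1 = 0 := by
        have h : s 1 ^ 2 = 0 ^ 2 := by
          linear_combination hsC - (s 1 + α * s 2) * hs2 - (l₂ ^ 2 * s 0) * hs0'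
        simpa using sqrt_eq _ _ h
      funext i
      fin_cases i
      · exact hs0'
      · exact hs1
      · exact hs2
    · have key := conic_trace (F := F) hα hs2 hsC
      have h : l₂ * (s 0 / s 2) = l₁ * l₂ := by
        rw [hs0]; field_simp
      rw [h, hl] at key
      exact zero_ne_one key
  · by_cases hs2 : s 2 = 0
    · -- case s 2 = 0, r 2 ≠ 0
      have hs1 : s 1 = l₂ * s 0 := by
        apply sqrt_eq
        linear_combination hsC - (s 1 + α * s 2) * hs2 - (l₂ ^ 2 * s 0 ^ 2) * two
      have hs0 : s 0 ≠ 0 := by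
        intro h0
        apply hs
        funext i
        fin_cases i
        · exact h0
        · show s 1 = 0
          rw [hs1, h0, mul_zero]
        · exact hs2
      have hr0 : r 0 = l₂ * r 2 := by
        apply mul_right_cancel₀ hs0
        linear_combination E - r 1 * hs2 - r 2 * hs1 - (l₂ * r 2 * s 0) * two
      have key := conic_trace (F := F) hα hr2 hrC
      have h : l₁ * (r 0 / r 2) = l₁ * l₂ := by
        rw [hr0]; field_simp
      rw [h, hl] at key
      exact zero_ne_one key
    · -- main case: r 2 ≠ 0 and s 2 ≠ 0
      set a := r 0 / r 2 with ha_def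
      set b := s 0 / s 2 with hb_def
      set u := r 1 / r 2 with hu_def
      set v := s 1 / s 2 with hv_def
      have ha : Algebra.trace (ZMod 2) F (l₁ * a) = 1 := conic_trace (F := F) hα hr2 hrC
      have hb : Algebra.trace (ZMod 2) F (l₂ * b) = 1 := conic_trace (F := F) hα hs2 hsC
      have hu : u ^ 2 + u + α + l₁ ^ 2 * a ^ 2 = 0 := by
        rw [hu_def, ha_def]
        field_simp
        linear_combination hrC
      have hv : v ^ 2 + v + α + l₂ ^ 2 * b ^ 2 = 0 := by
        rw [hv_def, hb_def]
        field_simp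
        linear_combination hsC
      have hE : a * b + v + u = 0 := by
        rw [ha_def, hb_def, hu_def, hv_def]
        field_simp
        linear_combination E
      have huv : u + v = a * b := by
        linear_combination (-1 : F) * hE + (u + v) * two
      have hsum : a ^ 2 * b ^ 2 + a * b + l₁ ^ 2 * a ^ 2 + l₂ ^ 2 * b ^ 2 = 0 := by
        linear_combination hu + hv - (u + v + a * b + 1) * huv + (u * v - α) * two
      have ha0 : a ≠ 0 := by
        intro h
        rw [h, mul_zero, map_zero] at ha
        exact zero_ne_one ha
      by_cases ha2 : a = l₂
      · have hlb : l₂ * b = (l₁ * l₂) ^ 2 := by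
          linear_combination hsum + (-(b ^ 2 + l₁ ^ 2) * (a + l₂) - b) * ha2 -
            (l₁ ^ 2 * l₂ ^ 2 + l₂ ^ 2 * b ^ 2) * two
        rw [hlb, tr_sq, hl] at hb
        exact zero_ne_one hb
      · have hd : a + l₂ ≠ 0 := by
          intro h
          apply ha2
          linear_combination h - l₂ * two
        have ht : (b * (a + l₂) ^ 2 / a) ^ 2 + (b * (a + l₂) ^ 2 / a) +
            (l₁ * (a + l₂)) ^ 2 = 0 := by
          clear_value a b
          field_simp
          linear_combination ((a + l₂) ^ 2) * hsum +
            ((a + l₂) ^ 2 * a * l₂ * b ^ 2) * two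
        have h0 := quad_trace ht
        rw [tr_sq] at h0
        have hld : l₁ * (a + l₂) = l₁ * a + l₁ * l₂ := by ring
        rw [hld, map_add, ha, hl] at h0
        simp at h0
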